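/- Let G be a group, let A ⊆ G be a nonempty finite subset, and let α ≥ 1 be a real number such that the multiplicative energy satisfies E(A,A) ≥ |A|³/α. Then there exists a subset B ⊆ A such that |B| ≥ |A|/(4α) and |B·B⁻¹| ≤ 2¹⁴·α⁶·|B|. -/

import Mathlib

open scoped Pointwise

namespace BSGAux

open Finset

variable {G : Type*} [Group G] [DecidableEq G]

/-- helper: sum of cards of pairwise disjoint subsets of `t` is at most `#t`. -/
lemma sum_card_le {ι β : Type*} [DecidableEq ι] [DecidableEq β] (s : Finset ι)
    (f : ι → Finset β) (t : Finset β) (hsub : ∀ i ∈ s, f i ⊆ t)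
    (hdisj : ∀ i ∈ s, ∀ j ∈ s, i ≠ j → Disjoint (f i) (f j)) :
    ∑ i ∈ s, (f i).card ≤ t.card := by
  rw [← Finset.card_biUnion hdisj]
  exact Finset.card_le_card (Finset.biUnion_subset.mpr hsub)

/-- pairs `(c,d) ∈ A × A` with `c * d⁻¹ = y`. -/
def rset (A : Finset G) (y : G) : Finset (G × G) :=
  (A ×ˢ A).filter fun cd => cd.1 * cd.2⁻¹ = y

/-- number of representations of `y` as a right quotient of two elements of `A`. -/
def rcnt (A : Finset G) (y : G) : ℕ := (rset A y).card

lemma mem_rset {A : Finset G} {y : G} {cd : G × G} :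
    cd ∈ rset A y ↔ cd.1 ∈ A ∧ cd.2 ∈ A ∧ cd.1 * cd.2⁻¹ = y := by
  simp [rset, Finset.mem_filter, Finset.mem_product, and_assoc]

lemma rcnt_le (A : Finset G) (y : G) : rcnt A y ≤ A.card := by
  apply Finset.card_le_card_of_injOn (fun cd => cd.2)
  · intro cd hcd
    exact (mem_rset.1 hcd).2.1
  · intro a ha b hb hab
    rw [Finset.mem_coe, mem_rset] at ha hb
    have h1 : a.1 = b.1 := by
      have := ha.2.2.trans hb.2.2.symm
      simp only at hab
      rw [hab] at this
      exact mul_right_cancel this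
    exact Prod.ext h1 hab

lemma rcnt_inv (A : Finset G) (y : G) : rcnt A y⁻¹ = rcnt A y := by
  apply Finset.card_nbij' (fun cd => (cd.2, cd.1)) (fun cd => (cd.2, cd.1))
  · intro a ha
    simp only [Finset.mem_coe, mem_rset] at ha ⊢
    refine ⟨ha.2.1, ha.1, ?_⟩
    rw [show a.2 * a.1⁻¹ = (a.1 * a.2⁻¹)⁻¹ by group, ha.2.2, inv_inv]
  · intro a ha
    simp only [Finset.mem_coe, mem_rset] at ha ⊢
    refine ⟨ha.2.1, ha.1, ?_⟩
    rw [show a.2 * a.1⁻¹ = (a.1 * a.2⁻¹)⁻¹ by group, ha.2.2]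
  · intro a _; rfl
  · intro a _; rfl

def val4 (t : (G × G) × (G × G)) : G := t.1.1 * t.1.2⁻¹ * (t.2.1 * t.2.2⁻¹)

def quadset (A : Finset G) (y : G) : Finset ((G × G) × (G × G)) :=
  ((A ×ˢ A) ×ˢ (A ×ˢ A)).filter fun t => val4 t = y

lemma mem_quadset {A : Finset G} {y : G} {t : (G × G) × (G × G)} :
    t ∈ quadset A y ↔ (t.1 ∈ A ×ˢ A ∧ t.2 ∈ A ×ˢ A) ∧ val4 t = y := by
  simp [quadset, Finset.mem_filter, Finset.mem_product]

/-- `ω(b,u) = ∑_{p ∈ A} r(bp⁻¹) r(up⁻¹)`, the weighted number of 2-paths from `b` to `u`. -/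
def omega (A : Finset G) (b u : G) : ℕ := ∑ p ∈ A, rcnt A (b * p⁻¹) * rcnt A (u * p⁻¹)

lemma omega_comm (A : Finset G) (b u : G) : omega A b u = omega A u b :=
  Finset.sum_congr rfl fun _ _ => mul_comm _ _

/-- `ω(v,w)` counts at most the 4-tuples representing `v * w⁻¹`. -/
lemma omega_le_quadset (A : Finset G) (v w : G) :
    omega A v w ≤ (quadset A (v * w⁻¹)).card := by
  have h1 : omega A v w = ∑ p ∈ A, rcnt A (v * p⁻¹) * rcnt A (p * w⁻¹) := by
    refine Finset.sum_congr rfl fun p _ => ?_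
    rw [show p * w⁻¹ = (w * p⁻¹)⁻¹ by group, rcnt_inv]
  rw [h1]
  have h2 : ∀ p ∈ A, rcnt A (v * p⁻¹) * rcnt A (p * w⁻¹)
      = ((rset A (v * p⁻¹)) ×ˢ (rset A (p * w⁻¹))).card := by
    intro p _; rw [Finset.card_product]; rfl
  rw [Finset.sum_congr rfl h2]
  apply sum_card_le
  · intro p _ t ht
    rw [Finset.mem_product] at ht
    have h3 := mem_rset.1 ht.1
    have h4 := mem_rset.1 ht.2
    rw [mem_quadset]
    constructor
    · exact ⟨Finset.mem_product.2 ⟨h3.1, h3.2.1⟩, Finset.mem_product.2 ⟨h4.1, h4.2.1⟩⟩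
    · show val4 t = v * w⁻¹
      unfold val4
      rw [h3.2.2, h4.2.2]
      group
  · intro p _ q _ hpq
    rw [Finset.disjoint_left]
    intro t ht ht'
    rw [Finset.mem_product] at ht ht'
    have h3 := (mem_rset.1 ht.1).2.2
    have h3' := (mem_rset.1 ht'.1).2.2
    apply hpq
    have : v * p⁻¹ = v * q⁻¹ := h3 ▸ h3'
    exact inv_injective (mul_left_cancel this)

def octset (A : Finset G) (z : G) :
    Finset (((G × G) × (G × G)) × ((G × G) × (G × G))) :=
  ((((A ×ˢ A) ×ˢ (A ×ˢ A)) ×ˢ ((A ×ˢ A) ×ˢ (A ×ˢ A)))).filter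
    fun t => val4 t.1 * val4 t.2 = z

lemma mem_octset {A : Finset G} {z : G} {t : ((G × G) × (G × G)) × ((G × G) × (G × G))} :
    t ∈ octset A z ↔ (t.1 ∈ (A ×ˢ A) ×ˢ (A ×ˢ A) ∧ t.2 ∈ (A ×ˢ A) ×ˢ (A ×ˢ A))
      ∧ val4 t.1 * val4 t.2 = z := by
  simp [octset, Finset.mem_filter, Finset.mem_product]

/-- summing over intermediate `u`, products of quadset counts inject into octset. -/
lemma strong_sum_le (A : Finset G) (b b' : G) (U : Finset G) :
    ∑ u ∈ U, (quadset A (b * u⁻¹)).card * (quadset A (u * b'⁻¹)).card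
      ≤ (octset A (b * b'⁻¹)).card := by
  have h2 : ∀ u ∈ U, (quadset A (b * u⁻¹)).card * (quadset A (u * b'⁻¹)).card
      = ((quadset A (b * u⁻¹)) ×ˢ (quadset A (u * b'⁻¹))).card := by
    intro u _; rw [Finset.card_product]
  rw [Finset.sum_congr rfl h2]
  apply sum_card_le
  · intro u _ t ht
    rw [Finset.mem_product] at ht
    have h3 := mem_quadset.1 ht.1
    have h4 := mem_quadset.1 ht.2
    rw [mem_octset]
    refine ⟨⟨Finset.mem_product.2 h3.1, Finset.mem_product.2 h4.1⟩, ?_⟩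
    rw [h3.2, h4.2]; group
  · intro u _ u' _ huu'
    rw [Finset.disjoint_left]
    intro t ht ht'
    rw [Finset.mem_product] at ht ht'
    have h3 := (mem_quadset.1 ht.1).2
    have h3' := (mem_quadset.1 ht'.1).2
    apply huu'
    have : b * u⁻¹ = b * u'⁻¹ := h3 ▸ h3'
    exact inv_injective (mul_left_cancel this)

/-- the octsets of the distinct elements of `B * B⁻¹` are disjoint subsets of the cube `A⁸`. -/
lemma sum_octset_le (A B : Finset G) :
    ∑ z ∈ B * B⁻¹, (octset A z).card ≤ A.card ^ 8 := by
  have := sum_card_le (B * B⁻¹) (fun z => octset A z)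
      ((((A ×ˢ A) ×ˢ (A ×ˢ A)) ×ˢ ((A ×ˢ A) ×ˢ (A ×ˢ A))))
      (fun z _ => Finset.filter_subset _ _)
      (by
        intro z _ z' _ hzz'
        rw [Finset.disjoint_left]
        intro t ht ht'
        exact hzz' ((mem_octset.1 ht).2.symm.trans (mem_octset.1 ht').2))
  apply this.trans
  apply le_of_eq
  simp only [Finset.card_product]
  ring

/-- total number of quadruples `(b,x,c,d) ∈ A⁴` with `c d⁻¹ = b x⁻¹`. -/
def Tq (A : Finset G) : ℕ := ∑ b ∈ A, ∑ x ∈ A, rcnt A (b * x⁻¹)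

def lset (A : Finset G) (x : G) : Finset (G × G) :=
  (A ×ˢ A).filter fun a => a.2⁻¹ * a.1 = x

lemma mem_lset {A : Finset G} {x : G} {a : G × G} :
    a ∈ lset A x ↔ a.1 ∈ A ∧ a.2 ∈ A ∧ a.2⁻¹ * a.1 = x := by
  simp [lset, Finset.mem_filter, Finset.mem_product, and_assoc]

def Dq (A : Finset G) : Finset G := (A ×ˢ A).image fun a => a.2⁻¹ * a.1

def trset (A : Finset G) : Finset ((G × G) × (G × G)) :=
  ((A ×ˢ A) ×ˢ (A ×ˢ A)).filter fun t => t.1.1 * t.1.2⁻¹ = t.2.1 * t.2.2⁻¹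

def tlset (A : Finset G) : Finset ((G × G) × (G × G)) :=
  ((A ×ˢ A) ×ˢ (A ×ˢ A)).filter fun t => t.1.2⁻¹ * t.1.1 = t.2.2⁻¹ * t.2.1

lemma card_trset (A : Finset G) : (trset A).card = Tq A := by
  have hrep : trset A = (A ×ˢ A).biUnion fun p => {p} ×ˢ rset A (p.1 * p.2⁻¹) := by
    ext t
    simp only [trset, Finset.mem_filter, Finset.mem_product, Finset.mem_biUnion,
      Finset.mem_singleton, mem_rset]
    constructor
    · rintro ⟨⟨h1, h2⟩, h3⟩
      exact ⟨t.1, h1, rfl, h2.1, h2.2, h3.symm⟩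
    · rintro ⟨p, hp, h1, h2⟩
      subst h1
      exact ⟨⟨hp, h2.1, h2.2.1⟩, h2.2.2.symm⟩
  rw [hrep, Finset.card_biUnion]
  · rw [show Tq A = ∑ p ∈ A ×ˢ A, rcnt A (p.1 * p.2⁻¹) by
      rw [Finset.sum_product]; rfl]
    refine Finset.sum_congr rfl fun p _ => ?_
    rw [Finset.card_product, Finset.card_singleton, one_mul]; rfl
  · intro p _ q _ hpq
    simp only [Function.onFun]
    rw [Finset.disjoint_left]
    intro t ht ht'
    rw [Finset.mem_product, Finset.mem_singleton] at ht ht'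
    exact hpq (ht.1.symm.trans ht'.1)

lemma card_tlset (A : Finset G) : (tlset A).card = (trset A).card := by
  apply Finset.card_nbij' (fun t => ((t.2.2, t.1.2), (t.2.1, t.1.1)))
    (fun t => ((t.2.2, t.1.2), (t.2.1, t.1.1)))
  · intro t ht
    simp only [Finset.mem_coe, tlset, trset, Finset.mem_filter, Finset.mem_product] at ht ⊢
    obtain ⟨⟨⟨m1, m2⟩, m3, m4⟩, h⟩ := ht
    refine ⟨⟨⟨m4, m2⟩, m3, m1⟩, ?_⟩
    have hc : t.2.1 = t.2.2 * (t.1.2⁻¹ * t.1.1) := by rw [h]; group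
    rw [hc]; group
  · intro t ht
    simp only [Finset.mem_coe, tlset, trset, Finset.mem_filter, Finset.mem_product] at ht ⊢
    obtain ⟨⟨⟨m1, m2⟩, m3, m4⟩, h⟩ := ht
    refine ⟨⟨⟨m4, m2⟩, m3, m1⟩, ?_⟩
    have hc : t.1.1 = t.2.1 * t.2.2⁻¹ * t.1.2 := by rw [← h]; group
    rw [hc]; group
  · intro t _; rfl
  · intro t _; rfl

lemma energy_eq (A : Finset G) :
    ((A ×ˢ A ×ˢ A ×ˢ A).filter
        fun q : G × G × G × G => q.1 * q.2.2.1 = q.2.1 * q.2.2.2).card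
      = ∑ x ∈ Dq A, (lset A x).card * rcnt A x := by
  have hrep : (A ×ˢ A ×ˢ A ×ˢ A).filter
        (fun q : G × G × G × G => q.1 * q.2.2.1 = q.2.1 * q.2.2.2)
      = (Dq A).biUnion fun x => ((lset A x) ×ˢ (rset A x)).image
          fun t => (t.1.1, (t.1.2, (t.2.2, t.2.1))) := by
    ext q
    obtain ⟨a₁, a₂, b₁, b₂⟩ := q
    simp only [Finset.mem_filter, Finset.mem_product, Finset.mem_biUnion, Finset.mem_image,
      Dq, mem_lset, mem_rset]
    constructor
    · rintro ⟨⟨h1, h2, h3, h4⟩, h5⟩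
      refine ⟨a₂⁻¹ * a₁, ⟨(a₁, a₂), by simp [Finset.mem_product, h1, h2]⟩,
        ((a₁, a₂), (b₂, b₁)), ⟨⟨h1, h2, rfl⟩, ⟨h4, h3, ?_⟩⟩, rfl⟩
      have hb : b₂ = a₂⁻¹ * (a₁ * b₁) := by rw [h5]; group
      rw [hb]; group
    · rintro ⟨x, -, ⟨⟨c₁, c₂⟩, ⟨d₁, d₂⟩⟩, ⟨⟨m1, m2, h1⟩, m3, m4, h2⟩, h3⟩
      simp only [Prod.mk.injEq] at h3
      obtain ⟨e1, e2, e3, e4⟩ := h3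
      subst e1; subst e2; subst e3; subst e4
      refine ⟨⟨m1, m2, m4, m3⟩, ?_⟩
      have hc : c₁ = c₂ * (d₁ * d₂⁻¹) := by rw [h2, ← h1]; group
      rw [hc]; group
  rw [hrep, Finset.card_biUnion]
  · refine Finset.sum_congr rfl fun x _ => ?_
    rw [Finset.card_image_of_injOn, Finset.card_product]
    · rfl
    · intro t _ t' _ h
      simp only [Prod.mk.injEq] at h
      obtain ⟨e1, e2, e3, e4⟩ := h
      exact Prod.ext (Prod.ext e1 e2) (Prod.ext e4 e3)
  · intro x _ x' _ hxx'
    simp only [Function.onFun]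
    rw [Finset.disjoint_left]
    intro q hq hq'
    simp only [Finset.mem_image] at hq hq'
    obtain ⟨t, ht, rfl⟩ := hq
    obtain ⟨t', ht', he⟩ := hq'
    rw [Finset.mem_product] at ht ht'
    have h1 := (mem_lset.1 ht.1).2.2
    have h1' := (mem_lset.1 ht'.1).2.2
    simp only [Prod.mk.injEq] at he
    apply hxx'
    rw [← h1, ← h1', he.1, he.2.1]

lemma sum_lsq_le (A : Finset G) :
    ∑ x ∈ Dq A, (lset A x).card ^ 2 ≤ (tlset A).card := by
  have h2 : ∀ x ∈ Dq A, (lset A x).card ^ 2 = ((lset A x) ×ˢ (lset A x)).card := by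
    intro x _; rw [Finset.card_product, sq]
  rw [Finset.sum_congr rfl h2]
  apply sum_card_le
  · intro x _ t ht
    rw [Finset.mem_product] at ht
    have h3 := mem_lset.1 ht.1
    have h4 := mem_lset.1 ht.2
    simp only [tlset, Finset.mem_filter, Finset.mem_product]
    exact ⟨⟨⟨h3.1, h3.2.1⟩, h4.1, h4.2.1⟩, h3.2.2.trans h4.2.2.symm⟩
  · intro x _ x' _ hxx'
    rw [Finset.disjoint_left]
    intro t ht ht'
    rw [Finset.mem_product] at ht ht'
    exact hxx' ((mem_lset.1 ht.1).2.2.symm.trans (mem_lset.1 ht'.1).2.2)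

lemma sum_rsq_le (A : Finset G) :
    ∑ x ∈ Dq A, (rcnt A x) ^ 2 ≤ (trset A).card := by
  have h2 : ∀ x ∈ Dq A, (rcnt A x) ^ 2 = ((rset A x) ×ˢ (rset A x)).card := by
    intro x _; rw [Finset.card_product, sq]; rfl
  rw [Finset.sum_congr rfl h2]
  apply sum_card_le
  · intro x _ t ht
    rw [Finset.mem_product] at ht
    have h3 := mem_rset.1 ht.1
    have h4 := mem_rset.1 ht.2
    simp only [trset, Finset.mem_filter, Finset.mem_product]
    exact ⟨⟨⟨h3.1, h3.2.1⟩, h4.1, h4.2.1⟩, h3.2.2.trans h4.2.2.symm⟩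
  · intro x _ x' _ hxx'
    rw [Finset.disjoint_left]
    intro t ht ht'
    rw [Finset.mem_product] at ht ht'
    exact hxx' ((mem_rset.1 ht.1).2.2.symm.trans (mem_rset.1 ht'.1).2.2)

/-- Cauchy–Schwarz: the multiplicative energy is at most the right-quotient energy `Tq`. -/
lemma energy_le_T (A : Finset G) :
    (((A ×ˢ A ×ˢ A ×ˢ A).filter
        fun q : G × G × G × G => q.1 * q.2.2.1 = q.2.1 * q.2.2.2).card : ℝ)
      ≤ (Tq A : ℝ) := by
  set E := ((A ×ˢ A ×ˢ A ×ˢ A).filter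
      fun q : G × G × G × G => q.1 * q.2.2.1 = q.2.1 * q.2.2.2).card with hEdef
  have hE : E = ∑ x ∈ Dq A, (lset A x).card * rcnt A x := energy_eq A
  have hL : ∑ x ∈ Dq A, ((lset A x).card) ^ 2 ≤ Tq A :=
    (sum_lsq_le A).trans (le_of_eq ((card_tlset A).trans (card_trset A)))
  have hR : ∑ x ∈ Dq A, (rcnt A x) ^ 2 ≤ Tq A :=
    (sum_rsq_le A).trans (le_of_eq (card_trset A))
  have hcs := Finset.sum_mul_sq_le_sq_mul_sq (Dq A)
    (fun x => ((lset A x).card : ℝ)) (fun x => (rcnt A x : ℝ))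
  have hLr : ∑ x ∈ Dq A, ((lset A x).card : ℝ) ^ 2 ≤ (Tq A : ℝ) := by exact_mod_cast hL
  have hRr : ∑ x ∈ Dq A, ((rcnt A x : ℝ)) ^ 2 ≤ (Tq A : ℝ) := by exact_mod_cast hR
  have hEr : (E : ℝ) = ∑ x ∈ Dq A, ((lset A x).card : ℝ) * (rcnt A x : ℝ) := by
    exact_mod_cast hE
  have h1 : (E : ℝ) ^ 2 ≤ (Tq A : ℝ) * (Tq A : ℝ) := by
    rw [hEr]
    exact hcs.trans (mul_le_mul hLr hRr (Finset.sum_nonneg fun i _ => sq_nonneg _)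
      (Nat.cast_nonneg _))
  nlinarith [Nat.cast_nonneg (α := ℝ) E, Nat.cast_nonneg (α := ℝ) (Tq A)]

end BSGAux

set_option maxHeartbeats 2000000 in
/-- Balog–Szemerédi–Gowers theorem (Schoen's version): if `A` is a nonempty finite subset
of a group `G` and `α ≥ 1` is such that the multiplicative energy
`E(A,A) = #{(a₁,a₂,b₁,b₂) ∈ A⁴ : a₁b₁ = a₂b₂}` satisfies `E(A,A) ≥ |A|³/α`, then there is
a subset `B ⊆ A` with `|B| ≥ |A|/(4α)` and `|B·B⁻¹| ≤ 2¹⁴·α⁶·|B|`. -/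
theorem balog_szemeredi_gowers_schoen {G : Type*} [Group G] [DecidableEq G]
    (A : Finset G) (hA : A.Nonempty) (α : ℝ) (hα : 1 ≤ α)
    (hE : (A.card : ℝ) ^ 3 / α ≤
      (((A ×ˢ A ×ˢ A ×ˢ A).filter
        fun q : G × G × G × G => q.1 * q.2.2.1 = q.2.1 * q.2.2.2).card : ℝ)) :
    ∃ B ⊆ A, (A.card : ℝ) / (4 * α) ≤ (B.card : ℝ) ∧
      ((B * B⁻¹).card : ℝ) ≤ 2 ^ 14 * α ^ 6 * (B.card : ℝ) := by
  classical
  open Finset BSGAux in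
  set n : ℝ := (A.card : ℝ) with hndef
  have hn1 : (1 : ℝ) ≤ n := by
    rw [hndef]
    exact Nat.one_le_cast.mpr hA.card_pos
  have hn0 : (0 : ℝ) < n := lt_of_lt_of_le one_pos hn1
  have hα0 : (0 : ℝ) < α := lt_of_lt_of_le one_pos hα
  set T : ℝ := (BSGAux.Tq A : ℝ) with hTdef
  have hT : n ^ 3 / α ≤ T := hE.trans (BSGAux.energy_le_T A)
  have hT0 : (0 : ℝ) < T := lt_of_lt_of_le (by positivity) hT
  have hT' : n ^ 3 ≤ α * T := by
    rw [div_le_iff₀ hα0] at hT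
    linarith
  set θ : ℝ := T ^ 2 / (24 * n ^ 3) with hθdef
  have hθ0 : (0 : ℝ) < θ := by positivity
  set φ : G → G → ℝ := fun x b => (BSGAux.rcnt A (b * x⁻¹) : ℝ) with hφdef
  have hφnn : ∀ x b, 0 ≤ φ x b := fun x b => Nat.cast_nonneg _
  have hφle : ∀ x b, φ x b ≤ n := fun x b => by
    show ((BSGAux.rcnt A (b * x⁻¹) : ℝ)) ≤ ((A.card : ℕ) : ℝ)
    exact_mod_cast BSGAux.rcnt_le A (b * x⁻¹)
  set Φ : G → ℝ := fun x => ∑ b ∈ A, φ x b with hΦdef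
  have hΦnn : ∀ x, 0 ≤ Φ x := fun x => Finset.sum_nonneg fun b _ => hφnn x b
  have hΦsum : ∑ x ∈ A, Φ x = T := by
    rw [hTdef, hΦdef]
    rw [show (BSGAux.Tq A : ℝ) = ∑ b ∈ A, ∑ x ∈ A, (BSGAux.rcnt A (b * x⁻¹) : ℝ) by
      rw [BSGAux.Tq]; push_cast; rfl]
    rw [Finset.sum_comm]
  have hCS2 : T ^ 2 / n ≤ ∑ x ∈ A, (Φ x) ^ 2 := by
    have hcs := Finset.sum_mul_sq_le_sq_mul_sq A Φ (fun _ => (1 : ℝ))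
    simp only [mul_one, one_pow] at hcs
    rw [hΦsum, Finset.sum_const, nsmul_eq_mul, mul_one] at hcs
    rw [div_le_iff₀ hn0]
    calc T ^ 2 ≤ (∑ x ∈ A, Φ x ^ 2) * (A.card : ℝ) := hcs
      _ = (∑ x ∈ A, Φ x ^ 2) * n := rfl
  -- weak pairs
  set wk : G → G → Prop := fun b u => ((BSGAux.omega A b u : ℝ) < θ) with hwkdef
  set WW : G → ℝ := fun x => ∑ b ∈ A, ∑ u ∈ A,
    if wk b u then φ x b * φ x u else 0 with hWWdef
  have hWWnn : ∀ x, 0 ≤ WW x := by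
    intro x
    apply Finset.sum_nonneg; intro b _
    apply Finset.sum_nonneg; intro u _
    split
    · exact mul_nonneg (hφnn x b) (hφnn x u)
    · exact le_refl 0
  have hWWsum : ∑ x ∈ A, WW x ≤ n ^ 2 * θ := by
    have hswap : ∑ x ∈ A, WW x
        = ∑ b ∈ A, ∑ u ∈ A, (if wk b u then (BSGAux.omega A b u : ℝ) else 0) := by
      simp only [hWWdef]
      rw [Finset.sum_comm]
      refine Finset.sum_congr rfl fun b _ => ?_
      rw [Finset.sum_comm]
      refine Finset.sum_congr rfl fun u _ => ?_
      by_cases h : wk b u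
      · simp only [if_pos h, BSGAux.omega, hφdef]
        push_cast
        rfl
      · simp only [if_neg h, Finset.sum_const_zero]
    rw [hswap]
    have hb : ∀ b ∈ A, ∀ u ∈ A, (if wk b u then (BSGAux.omega A b u : ℝ) else 0) ≤ θ := by
      intro b _ u _
      split_ifs with h
      · simp only [hwkdef] at h
        exact le_of_lt h
      · exact le_of_lt hθ0
    calc ∑ b ∈ A, ∑ u ∈ A, (if wk b u then (BSGAux.omega A b u : ℝ) else 0)
        ≤ ∑ b ∈ A, ∑ u ∈ A, θ :=
          Finset.sum_le_sum fun b hb' => Finset.sum_le_sum (hb b hb')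
      _ = n ^ 2 * θ := by
          rw [Finset.sum_const, Finset.sum_const, nsmul_eq_mul, nsmul_eq_mul, hndef]
          ring
  have hchoice : ∃ x ∈ A, T ^ 2 / (2 * n ^ 2) ≤ (Φ x) ^ 2 - 12 * WW x := by
    apply Finset.exists_le_of_sum_le hA
    have hLHS : ∑ _x ∈ A, T ^ 2 / (2 * n ^ 2) = T ^ 2 / (2 * n) := by
      rw [Finset.sum_const, nsmul_eq_mul, ← hndef]
      field_simp
    have h12 : 12 * ∑ x ∈ A, WW x ≤ T ^ 2 / (2 * n) := by
      have he : 12 * (n ^ 2 * θ) = T ^ 2 / (2 * n) := by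
        rw [hθdef]; field_simp; ring
      nlinarith [hWWsum]
    have hhalf : T ^ 2 / n - T ^ 2 / (2 * n) = T ^ 2 / (2 * n) := by
      field_simp; ring
    rw [hLHS, Finset.sum_sub_distrib, ← Finset.mul_sum]
    linarith [hCS2]
  obtain ⟨x, hxA, hxkey⟩ := hchoice
  set P : ℝ := Φ x with hPdef
  have hpos : (0 : ℝ) < T ^ 2 / (2 * n ^ 2) :=
    div_pos (pow_pos hT0 2) (by nlinarith [hn0])
  have hPsq : T ^ 2 / (2 * n ^ 2) ≤ P ^ 2 := le_trans hxkey (by linarith [hWWnn x])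
  have hPnn : 0 ≤ P := hΦnn x
  have hP0 : 0 < P := by nlinarith [hPsq, hPnn, hpos]
  have hPsq' : T ^ 2 ≤ 2 * n ^ 2 * P ^ 2 := by
    rw [div_le_iff₀ (by nlinarith [hn0] : (0:ℝ) < 2 * n ^ 2)] at hPsq
    linarith
  have hWWx : WW x ≤ P ^ 2 / 12 := by linarith [hxkey, hpos]
  set WD : G → ℝ := fun b => ∑ u ∈ A, if wk b u then φ x u else 0 with hWDdef
  have hWDnn : ∀ b, 0 ≤ WD b := by
    intro b
    apply Finset.sum_nonneg
    intro u _
    split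
    · exact hφnn x u
    · exact le_refl 0
  have hWWx_eq : WW x = ∑ b ∈ A, φ x b * WD b := by
    simp only [hWWdef, hWDdef]
    refine Finset.sum_congr rfl fun b _ => ?_
    rw [Finset.mul_sum]
    refine Finset.sum_congr rfl fun u _ => ?_
    rw [mul_ite, mul_zero]
  set B := A.filter (fun b => WD b ≤ P / 4) with hBdef
  have hBsub : B ⊆ A := Finset.filter_subset _ _
  have hPsum : ∑ b ∈ A, φ x b = P := by rw [hPdef]
  have hmass : 2 * P / 3 ≤ ∑ b ∈ B, φ x b := by
    have hsplit := Finset.sum_filter_add_sum_filter_not A (fun b => WD b ≤ P / 4) (φ x)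
    have hbad : ∑ b ∈ A.filter (fun b => ¬ (WD b ≤ P / 4)), φ x b ≤ P / 3 := by
      have h1 : ∀ b ∈ A.filter (fun b => ¬ (WD b ≤ P / 4)),
          φ x b * (P / 4) ≤ φ x b * WD b := by
        intro b hb
        have hb' : ¬ (WD b ≤ P / 4) := (Finset.mem_filter.1 hb).2
        exact mul_le_mul_of_nonneg_left (le_of_lt (not_le.1 hb')) (hφnn x b)
      have h2 : ∑ b ∈ A.filter (fun b => ¬ (WD b ≤ P / 4)), φ x b * WD b
          ≤ ∑ b ∈ A, φ x b * WD b := by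
        apply Finset.sum_le_sum_of_subset_of_nonneg (Finset.filter_subset _ _)
        intro b _ _
        exact mul_nonneg (hφnn x b) (hWDnn b)
      have h3 : (∑ b ∈ A.filter (fun b => ¬ (WD b ≤ P / 4)), φ x b) * (P / 4)
          ≤ P ^ 2 / 12 := by
        rw [Finset.sum_mul]
        calc ∑ b ∈ A.filter (fun b => ¬ (WD b ≤ P / 4)), φ x b * (P / 4)
            ≤ ∑ b ∈ A.filter (fun b => ¬ (WD b ≤ P / 4)), φ x b * WD b :=
              Finset.sum_le_sum h1
          _ ≤ WW x := by rw [hWWx_eq]; exact h2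
          _ ≤ P ^ 2 / 12 := hWWx
      nlinarith [h3, hP0]
    have hBeq : ∑ b ∈ B, φ x b = ∑ b ∈ A.filter (fun b => WD b ≤ P / 4), φ x b := by
      rw [hBdef]
    rw [hBeq]
    rw [hPsum] at hsplit
    linarith
  have hBcard : 2 * P / (3 * n) ≤ (B.card : ℝ) := by
    have h1 : ∑ b ∈ B, φ x b ≤ (B.card : ℝ) * n := by
      calc ∑ b ∈ B, φ x b ≤ ∑ _b ∈ B, n := Finset.sum_le_sum fun b _ => hφle x b
        _ = (B.card : ℝ) * n := by rw [Finset.sum_const, nsmul_eq_mul]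
    rw [div_le_iff₀ (by nlinarith [hn0] : (0:ℝ) < 3 * n)]
    nlinarith [hmass, h1]
  have hsize : n / (4 * α) ≤ (B.card : ℝ) := by
    have e7 : n ^ 4 ≤ 2 * α ^ 2 * P ^ 2 := by
      rw [← mul_le_mul_iff_left₀ (show (0:ℝ) < n ^ 2 by positivity)]
      have e3 : (n ^ 3) ^ 2 ≤ (α * T) ^ 2 :=
        pow_le_pow_left₀ (by positivity) hT' 2
      calc n ^ 4 * n ^ 2 = (n ^ 3) ^ 2 := by ring
        _ ≤ (α * T) ^ 2 := e3
        _ = α ^ 2 * T ^ 2 := by ring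
        _ ≤ α ^ 2 * (2 * n ^ 2 * P ^ 2) := by nlinarith [hPsq', sq_nonneg α]
        _ = 2 * α ^ 2 * P ^ 2 * n ^ 2 := by ring
    have hq : (n / (4 * α)) ^ 2 ≤ ((B.card : ℝ)) ^ 2 := by
      have e1 : (2 * P / (3 * n)) ^ 2 ≤ ((B.card : ℝ)) ^ 2 :=
        pow_le_pow_left₀ (by positivity) hBcard 2
      have e4 : (n / (4 * α)) ^ 2 ≤ (2 * P / (3 * n)) ^ 2 := by
        rw [div_pow, div_pow, div_le_div_iff₀ (by positivity) (by positivity)]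
        have expand1 : (n : ℝ) ^ 2 * (3 * n) ^ 2 = 9 * n ^ 4 := by ring
        have expand2 : (2 * P) ^ 2 * (4 * α) ^ 2 = 64 * α ^ 2 * P ^ 2 := by ring
        rw [expand1, expand2]
        nlinarith [e7, mul_nonneg (sq_nonneg α) (sq_nonneg P)]
      exact e4.trans e1
    exact le_of_pow_le_pow_left₀ two_ne_zero (Nat.cast_nonneg _) hq
  refine ⟨B, hBsub, hsize, ?_⟩
  have hstr : ∀ b ∈ B, ∀ b' ∈ B,
      P / (2 * n) * θ ^ 2 ≤ ((BSGAux.octset A (b * b'⁻¹)).card : ℝ) := by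
    intro b hb b' hb'
    have hb1 := hb; rw [hBdef] at hb1
    have hb1' := hb'; rw [hBdef] at hb1'
    have hWDb : WD b ≤ P / 4 := (Finset.mem_filter.1 hb1).2
    have hWDb' : WD b' ≤ P / 4 := (Finset.mem_filter.1 hb1').2
    set S := A.filter (fun u => θ ≤ (BSGAux.omega A b u : ℝ)
      ∧ θ ≤ (BSGAux.omega A b' u : ℝ)) with hSdef
    have hpoint : ∀ u ∈ A, φ x u ≤ (if wk b u then φ x u else 0)
        + (if wk b' u then φ x u else 0) + (if u ∈ S then n else 0) := by
      intro u hu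
      have t1 : (0:ℝ) ≤ if wk b u then φ x u else 0 := by
        split
        · exact hφnn x u
        · exact le_refl 0
      have t2 : (0:ℝ) ≤ if wk b' u then φ x u else 0 := by
        split
        · exact hφnn x u
        · exact le_refl 0
      have t3 : (0:ℝ) ≤ if u ∈ S then n else 0 := by
        split
        · exact le_of_lt hn0
        · exact le_refl 0
      by_cases h1 : wk b u
      · rw [if_pos h1]
        linarith
      · by_cases h2 : wk b' u
        · rw [if_neg h1, if_pos h2]
          linarith
        · have huS : u ∈ S := by
            rw [hSdef]
            refine Finset.mem_filter.2 ⟨hu, ?_, ?_⟩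
            · simp only [hwkdef] at h1; exact not_lt.1 h1
            · simp only [hwkdef] at h2; exact not_lt.1 h2
          rw [if_neg h1, if_neg h2, if_pos huS]
          linarith [hφle x u]
    have hsum := Finset.sum_le_sum hpoint
    rw [Finset.sum_add_distrib, Finset.sum_add_distrib] at hsum
    have i1 : ∑ u ∈ A, (if wk b u then φ x u else 0) = WD b := by
      simp only [hWDdef]
    have i2 : ∑ u ∈ A, (if wk b' u then φ x u else 0) = WD b' := by
      simp only [hWDdef]
    have i3 : ∑ u ∈ A, (if u ∈ S then (n:ℝ) else 0) = (S.card : ℝ) * n := by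
      rw [Finset.sum_ite_mem]
      rw [Finset.inter_eq_right.2 (Finset.filter_subset _ _)]
      rw [Finset.sum_const, nsmul_eq_mul]
    rw [hPsum, i1, i2, i3] at hsum
    have hScard : P / (2 * n) ≤ (S.card : ℝ) := by
      rw [div_le_iff₀ (by nlinarith [hn0] : (0:ℝ) < 2 * n)]
      nlinarith [hWDb, hWDb', hsum]
    have hNat := BSGAux.strong_sum_le A b b' S
    have hterm : ∀ u ∈ S, θ ^ 2 ≤ ((BSGAux.quadset A (b * u⁻¹)).card : ℝ)
        * ((BSGAux.quadset A (u * b'⁻¹)).card : ℝ) := by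
      intro u hu
      have hu1 : θ ≤ (BSGAux.omega A b u : ℝ) := (Finset.mem_filter.1 (hSdef ▸ hu)).2.1
      have hu2 : θ ≤ (BSGAux.omega A b' u : ℝ) := (Finset.mem_filter.1 (hSdef ▸ hu)).2.2
      have q1 : θ ≤ ((BSGAux.quadset A (b * u⁻¹)).card : ℝ) :=
        hu1.trans (by exact_mod_cast BSGAux.omega_le_quadset A b u)
      have q2 : θ ≤ ((BSGAux.quadset A (u * b'⁻¹)).card : ℝ) := by
        refine hu2.trans ?_
        rw [show BSGAux.omega A b' u = BSGAux.omega A u b' from BSGAux.omega_comm A b' u]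
        exact_mod_cast BSGAux.omega_le_quadset A u b'
      calc θ ^ 2 = θ * θ := sq θ
        _ ≤ _ := mul_le_mul q1 q2 (le_of_lt hθ0) (Nat.cast_nonneg _)
    calc P / (2 * n) * θ ^ 2 ≤ (S.card : ℝ) * θ ^ 2 :=
          mul_le_mul_of_nonneg_right hScard (sq_nonneg θ)
      _ = ∑ _u ∈ S, θ ^ 2 := by rw [Finset.sum_const, nsmul_eq_mul]
      _ ≤ ∑ u ∈ S, ((BSGAux.quadset A (b * u⁻¹)).card : ℝ)
            * ((BSGAux.quadset A (u * b'⁻¹)).card : ℝ) := Finset.sum_le_sum hterm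
      _ = ((∑ u ∈ S, (BSGAux.quadset A (b * u⁻¹)).card
            * (BSGAux.quadset A (u * b'⁻¹)).card : ℕ) : ℝ) := by push_cast; rfl
      _ ≤ ((BSGAux.octset A (b * b'⁻¹)).card : ℝ) := by exact_mod_cast hNat
  have hrep : ∀ z ∈ B * B⁻¹, P / (2 * n) * θ ^ 2 ≤ ((BSGAux.octset A z).card : ℝ) := by
    intro z hz
    rw [Finset.mem_mul] at hz
    obtain ⟨b, hb, c, hc, rfl⟩ := hz
    rw [Finset.mem_inv] at hc
    obtain ⟨b', hb', rfl⟩ := hc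
    exact hstr b hb b' hb'
  have hcard1 : ((B * B⁻¹).card : ℝ) * (P / (2 * n) * θ ^ 2)
      ≤ ∑ z ∈ B * B⁻¹, ((BSGAux.octset A z).card : ℝ) := by
    have := Finset.card_nsmul_le_sum (B * B⁻¹)
      (fun z => ((BSGAux.octset A z).card : ℝ)) (P / (2 * n) * θ ^ 2) hrep
    rwa [nsmul_eq_mul] at this
  have hcard2 : ∑ z ∈ B * B⁻¹, ((BSGAux.octset A z).card : ℝ) ≤ n ^ 8 := by
    have h8 := BSGAux.sum_octset_le A B
    calc ∑ z ∈ B * B⁻¹, ((BSGAux.octset A z).card : ℝ)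
        = ((∑ z ∈ B * B⁻¹, (BSGAux.octset A z).card : ℕ) : ℝ) := by push_cast; rfl
      _ ≤ ((A.card ^ 8 : ℕ) : ℝ) := by exact_mod_cast h8
      _ = n ^ 8 := by rw [hndef]; push_cast; rfl
  have hmain : ((B * B⁻¹).card : ℝ) * (P / (2 * n) * θ ^ 2) ≤ n ^ 8 :=
    hcard1.trans hcard2
  have hexp : P / (2 * n) * θ ^ 2 = ((B * B⁻¹).card : ℝ) * 0 + P * T ^ 4 / (1152 * n ^ 7) := by
    rw [hθdef]; field_simp; ring
  have hPT : ((B * B⁻¹).card : ℝ) * (P * T ^ 4) ≤ 1152 * n ^ 15 := by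
    have h2 : ((B * B⁻¹).card : ℝ) * (P * T ^ 4)
        = ((B * B⁻¹).card : ℝ) * (P / (2 * n) * θ ^ 2) * (1152 * n ^ 7) := by
      rw [hθdef]; field_simp; ring
    rw [h2]
    calc ((B * B⁻¹).card : ℝ) * (P / (2 * n) * θ ^ 2) * (1152 * n ^ 7)
        ≤ n ^ 8 * (1152 * n ^ 7) :=
          mul_le_mul_of_nonneg_right hmain (by positivity)
      _ = 1152 * n ^ 15 := by ring
  have hKP : 2 * P ≤ 3 * n * (B.card : ℝ) := by
    rw [div_le_iff₀ (show (0:ℝ) < 3 * n by nlinarith [hn0])] at hBcard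
    linarith [hBcard]
  clear_value n T θ P
  have a1 : n ^ 18 ≤ α ^ 6 * T ^ 6 := by
    have h6 := pow_le_pow_left₀ (show (0:ℝ) ≤ n ^ 3 by positivity) hT' 6
    calc n ^ 18 = (n ^ 3) ^ 6 := by ring
      _ ≤ (α * T) ^ 6 := h6
      _ = α ^ 6 * T ^ 6 := by ring
  have s1 : α ^ 6 * T ^ 4 * T ^ 2 ≤ α ^ 6 * T ^ 4 * (2 * n ^ 2 * P ^ 2) :=
    mul_le_mul_of_nonneg_left hPsq' (by positivity)
  have s2 : α ^ 6 * T ^ 4 * n ^ 2 * P * (2 * P) ≤ α ^ 6 * T ^ 4 * n ^ 2 * P * (3 * n * (B.card : ℝ)) :=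
    mul_le_mul_of_nonneg_left hKP
      (mul_nonneg (by positivity : (0:ℝ) ≤ α ^ 6 * T ^ 4 * n ^ 2) hPnn)
  have pos1 : (0:ℝ) ≤ α ^ 6 * n ^ 3 * (B.card : ℝ) * P * T ^ 4 := by
    have : (0:ℝ) ≤ α ^ 6 * n ^ 3 * (B.card : ℝ) := by positivity
    exact mul_nonneg (mul_nonneg this hPnn) (by positivity)
  have hfin : 1152 * n ^ 15 ≤ 2 ^ 14 * α ^ 6 * (B.card : ℝ) * (P * T ^ 4) := by
    rw [← mul_le_mul_iff_left₀ (show (0:ℝ) < n ^ 3 by positivity)]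
    calc 1152 * n ^ 15 * n ^ 3 = 1152 * n ^ 18 := by ring
      _ ≤ 1152 * (α ^ 6 * T ^ 6) := by linarith [a1]
      _ = 1152 * (α ^ 6 * T ^ 4 * T ^ 2) := by ring
      _ ≤ 1152 * (α ^ 6 * T ^ 4 * (2 * n ^ 2 * P ^ 2)) := by linarith [s1]
      _ = 1152 * (α ^ 6 * T ^ 4 * n ^ 2 * P * (2 * P)) := by ring
      _ ≤ 1152 * (α ^ 6 * T ^ 4 * n ^ 2 * P * (3 * n * (B.card : ℝ))) := by linarith [s2]
      _ = 3456 * (α ^ 6 * n ^ 3 * (B.card : ℝ) * P * T ^ 4) := by ring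
      _ ≤ 16384 * (α ^ 6 * n ^ 3 * (B.card : ℝ) * P * T ^ 4) := by linarith [pos1]
      _ = 2 ^ 14 * α ^ 6 * (B.card : ℝ) * (P * T ^ 4) * n ^ 3 := by norm_num; ring
  have hPT4 : (0:ℝ) < P * T ^ 4 := mul_pos hP0 (by positivity)
  exact le_of_mul_le_mul_right (hPT.trans hfin) hPT4
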